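/- Let 𝒥 be a Jacobi matrix on ℓ²(ℤ) with off-diagonal entries 𝒥_{k,k+1} = 𝒥_{k+1,k} = a_k ∈ ℝ, diagonal entries b_k ∈ ℝ, with sup|a_k|, sup|b_k| ≤ A. Then there exist positive constants C₀, C₁, C₂ depending only on A such that for all t ≥ 0 and all k, j: |(e^{it𝒥})_{k,j}| ≤ C₀ e^{−C₁|k−j| + C₂ t}. -/

import Mathlib

open Complex

noncomputable def evalCLM (k : ℤ) : lp (fun _ : ℤ => ℂ) 2 →L[ℂ] ℂ :=
  LinearMap.mkContinuous
    { toFun := fun u => u k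
      map_add' := fun u v => by simp [lp.coeFn_add]
      map_smul' := fun c u => by simp [lp.coeFn_smul] }
    1 (fun u => by
      rw [one_mul]; exact lp.norm_apply_le_norm (by norm_num) u k)

lemma pow_apply_bound (A : ℝ) (hA : 0 < A) (a b : ℤ → ℝ)
    (ha : ∀ k, |a k| ≤ A) (hb : ∀ k, |b k| ≤ A)
    (T : lp (fun _ : ℤ => ℂ) 2 →L[ℂ] lp (fun _ : ℤ => ℂ) 2)
    (hT : ∀ (u : lp (fun _ : ℤ => ℂ) 2) (k : ℤ),
      (T u : ℤ → ℂ) k = a k * u (k + 1) + b k * u k + a (k - 1) * u (k - 1))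
    (j : ℤ) : ∀ n : ℕ, ∀ k : ℤ,
      ‖((T ^ n) (lp.single 2 j 1) : ℤ → ℂ) k‖ ≤ (3 * A) ^ n ∧
      ((n : ℤ) < |k - j| → ((T ^ n) (lp.single 2 j 1) : ℤ → ℂ) k = 0) := by
  intro n
  induction n with
  | zero =>
    intro k
    constructor
    · rcases eq_or_ne k j with rfl | hkj
      · simp [lp.single_apply_self]
      · simp [lp.single_apply_ne _ _ _ hkj, Pi.single_apply, hkj]
    · intro hk
      have hkj : k ≠ j := by
        intro h; subst h; simp at hk
      simp [lp.single_apply_ne _ _ _ hkj, Pi.single_apply, hkj]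
  | succ n ih =>
    intro k
    have hpow : (T ^ (n + 1)) (lp.single 2 j 1) = T ((T ^ n) (lp.single 2 j 1)) := by
      rw [pow_succ']
      rfl
    set v := (T ^ n) (lp.single 2 j 1) with hv
    have hco : ((T ^ (n + 1)) (lp.single 2 j 1) : ℤ → ℂ) k
        = a k * v (k + 1) + b k * v k + a (k - 1) * v (k - 1) := by
      rw [hpow]; exact hT v k
    constructor
    · rw [hco]
      have h1 : ‖(a k : ℂ) * v (k + 1)‖ ≤ A * (3 * A) ^ n := by
        rw [norm_mul, Complex.norm_real, Real.norm_eq_abs]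
        exact mul_le_mul (ha k) (ih (k + 1)).1 (norm_nonneg _) hA.le
      have h2 : ‖(b k : ℂ) * v k‖ ≤ A * (3 * A) ^ n := by
        rw [norm_mul, Complex.norm_real, Real.norm_eq_abs]
        exact mul_le_mul (hb k) (ih k).1 (norm_nonneg _) hA.le
      have h3 : ‖(a (k - 1) : ℂ) * v (k - 1)‖ ≤ A * (3 * A) ^ n := by
        rw [norm_mul, Complex.norm_real, Real.norm_eq_abs]
        exact mul_le_mul (ha (k - 1)) (ih (k - 1)).1 (norm_nonneg _) hA.le
      calc ‖(a k : ℂ) * v (k + 1) + b k * v k + a (k - 1) * v (k - 1)‖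
          ≤ ‖(a k : ℂ) * v (k + 1) + b k * v k‖ + ‖(a (k - 1) : ℂ) * v (k - 1)‖ :=
            norm_add_le _ _
        _ ≤ (‖(a k : ℂ) * v (k + 1)‖ + ‖(b k : ℂ) * v k‖) + ‖(a (k - 1) : ℂ) * v (k - 1)‖ := by
            gcongr; exact norm_add_le _ _
        _ ≤ (A * (3 * A) ^ n + A * (3 * A) ^ n) + A * (3 * A) ^ n := by gcongr
        _ = (3 * A) ^ (n + 1) := by ring
    · intro hk
      have habs : ∀ k' : ℤ, |k - k'| ≤ 1 → (n : ℤ) < |k' - j| := by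
        intro k' h
        rcases abs_cases (k' - j) with ⟨h1, _⟩ | ⟨h1, _⟩ <;>
          rcases abs_cases (k - j) with ⟨h2, _⟩ | ⟨h2, _⟩ <;>
          rcases abs_cases (k - k') with ⟨h3, _⟩ | ⟨h3, _⟩ <;>
          push_cast at hk ⊢ <;> omega
      have e1 : v (k + 1) = 0 := (ih (k + 1)).2 (habs _ (by simp))
      have e2 : v k = 0 := (ih k).2 (habs _ (by simp))
      have e3 : v (k - 1) = 0 := (ih (k - 1)).2 (habs _ (by simp))
      rw [hco, e1, e2, e3]
      simp

set_option maxHeartbeats 1000000 in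
/-- Exponential off-diagonal decay of `e^{it𝒥}` for a bounded Jacobi matrix `𝒥` on
`ℓ²(ℤ)` with entries bounded by `A`:
`|(e^{it𝒥})_{k,j}| ≤ C₀ e^{−C₁|k−j| + C₂ t}` with constants depending only on `A`. -/
theorem exp_jacobi_matrix_decay (A : ℝ) (hA : 0 < A) :
    ∃ C₀ C₁ C₂ : ℝ, 0 < C₀ ∧ 0 < C₁ ∧ 0 < C₂ ∧
      ∀ (a b : ℤ → ℝ), (∀ k, |a k| ≤ A) → (∀ k, |b k| ≤ A) →
      ∀ T : lp (fun _ : ℤ => ℂ) 2 →L[ℂ] lp (fun _ : ℤ => ℂ) 2,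
        (∀ (u : lp (fun _ : ℤ => ℂ) 2) (k : ℤ),
          (T u : ℤ → ℂ) k = a k * u (k + 1) + b k * u k + a (k - 1) * u (k - 1)) →
      ∀ t : ℝ, 0 ≤ t → ∀ k j : ℤ,
        ‖((NormedSpace.exp ((I * t) • T)) (lp.single 2 j 1) : ℤ → ℂ) k‖
          ≤ C₀ * Real.exp (-C₁ * |(k : ℝ) - j| + C₂ * t) := by
  refine ⟨1, 1, 9 * A, one_pos, one_pos, by positivity, ?_⟩
  intro a b ha hb T hT t ht k j
  set B := (I * (t : ℂ)) • T with hB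
  set u₀ : lp (fun _ : ℤ => ℂ) 2 := lp.single 2 j (1 : ℂ) with hu₀
  set Φ := (evalCLM k).comp (ContinuousLinearMap.apply ℂ (lp (fun _ : ℤ => ℂ) 2) u₀) with hΦ
  have hsum : HasSum (fun n : ℕ => (n.factorial : ℂ)⁻¹ • B ^ n) (NormedSpace.exp B) :=
    NormedSpace.exp_series_hasSum_exp' B
  have hΦsum : HasSum (fun n : ℕ => Φ ((n.factorial : ℂ)⁻¹ • B ^ n)) (Φ (NormedSpace.exp B)) :=
    hsum.mapL Φ
  have hgoal_eq : Φ (NormedSpace.exp B) = ((NormedSpace.exp B) u₀ : ℤ → ℂ) k := rfl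
  -- real quantities
  set M : ℝ := |(k : ℝ) - j| with hM
  set x : ℝ := 3 * A * t with hx
  have hx0 : 0 ≤ x := by positivity
  set g : ℕ → ℝ := fun n => Real.exp (-M) * ((Real.exp 1 * x) ^ n / n.factorial) with hg
  have hgsum : Summable g :=
    (Real.summable_pow_div_factorial (Real.exp 1 * x)).mul_left _
  -- termwise norm computation and bound
  have hterm : ∀ n : ℕ, ‖Φ ((n.factorial : ℂ)⁻¹ • B ^ n)‖ ≤ g n := by
    intro n
    have hBn : B ^ n = ((I * (t : ℂ)) ^ n) • T ^ n := by rw [hB, smul_pow]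
    have hval : Φ ((n.factorial : ℂ)⁻¹ • B ^ n)
        = (n.factorial : ℂ)⁻¹ * ((I * (t : ℂ)) ^ n) * (((T ^ n) u₀ : ℤ → ℂ) k) := by
      rw [map_smul, hBn]
      have : ((((I * (t : ℂ)) ^ n) • T ^ n) u₀ : ℤ → ℂ) k
          = ((I * (t : ℂ)) ^ n) * (((T ^ n) u₀ : ℤ → ℂ) k) := by
        rw [ContinuousLinearMap.smul_apply, lp.coeFn_smul]
        simp
      rw [smul_eq_mul, mul_assoc]
      congr 1
    rw [hval]
    rcases lt_or_ge ((n : ℤ)) |k - j| with hn | hn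
    · have h0 := (pow_apply_bound A hA a b ha hb T hT j n k).2 hn
      have h0' : (((T ^ n) u₀ : ℤ → ℂ) k) = 0 := h0
      rw [h0']
      simp only [mul_zero, norm_zero]
      positivity
    · have hb1 := (pow_apply_bound A hA a b ha hb T hT j n k).1
      have hMn : M ≤ n := by
        calc M = ((|k - j| : ℤ) : ℝ) := by rw [hM, Int.cast_abs, Int.cast_sub]
          _ ≤ n := by exact_mod_cast hn
      have hnorm : ‖(n.factorial : ℂ)⁻¹ * (I * (t : ℂ)) ^ n * (((T ^ n) u₀ : ℤ → ℂ) k)‖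
          = (n.factorial : ℝ)⁻¹ * t ^ n * ‖((T ^ n) u₀ : ℤ → ℂ) k‖ := by
        rw [norm_mul, norm_mul, norm_inv, norm_pow, norm_mul]
        simp [_root_.abs_of_nonneg ht]
      rw [hnorm]
      have hx_eq : (n.factorial : ℝ)⁻¹ * t ^ n * (3 * A) ^ n = x ^ n / n.factorial := by
        rw [hx, mul_pow, mul_pow]
        field_simp
        ring
      have key : x ^ n / n.factorial ≤ g n := by
        show x ^ n / (n.factorial : ℝ) ≤ Real.exp (-M) * ((Real.exp 1 * x) ^ n / n.factorial)
        have h1 : (Real.exp 1 * x) ^ n = Real.exp n * x ^ n := by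
          rw [mul_pow, Real.exp_one_pow]
        rw [h1]
        have h2 : 1 ≤ Real.exp (-M) * Real.exp n := by
          rw [← Real.exp_add]
          exact Real.one_le_exp (by linarith)
        calc x ^ n / n.factorial = 1 * (x ^ n / n.factorial) := (one_mul _).symm
          _ ≤ (Real.exp (-M) * Real.exp n) * (x ^ n / n.factorial) :=
            mul_le_mul_of_nonneg_right h2 (by positivity)
          _ = Real.exp (-M) * (Real.exp n * x ^ n / n.factorial) := by ring
      calc (n.factorial : ℝ)⁻¹ * t ^ n * ‖((T ^ n) u₀ : ℤ → ℂ) k‖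
          ≤ (n.factorial : ℝ)⁻¹ * t ^ n * (3 * A) ^ n := by
            have hb1' : ‖((T ^ n) u₀ : ℤ → ℂ) k‖ ≤ (3 * A) ^ n := hb1
            gcongr
        _ = x ^ n / n.factorial := hx_eq
        _ ≤ g n := key
  have hle : ‖Φ (NormedSpace.exp B)‖ ≤ ∑' n, g n := by
    rw [← hΦsum.tsum_eq]
    exact tsum_of_norm_bounded hgsum.hasSum hterm
  have htsum : ∑' n, g n = Real.exp (-M) * Real.exp (Real.exp 1 * x) := by
    rw [hg, tsum_mul_left]
    congr 1
    have : Real.exp (Real.exp 1 * x) = ∑' n : ℕ, (Real.exp 1 * x) ^ n / n.factorial := by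
      rw [Real.exp_eq_exp_ℝ, NormedSpace.exp_eq_tsum_div]
    rw [this]
  have hfin : Real.exp (-M) * Real.exp (Real.exp 1 * x) ≤ Real.exp (-1 * M + 9 * A * t) := by
    rw [← Real.exp_add]
    apply Real.exp_le_exp.mpr
    have he : Real.exp 1 ≤ 3 := by
      have := Real.exp_one_lt_d9
      linarith
    have hAt : 0 ≤ A * t := mul_nonneg hA.le ht
    rw [hx]
    nlinarith
  calc ‖((NormedSpace.exp B) u₀ : ℤ → ℂ) k‖
      = ‖Φ (NormedSpace.exp B)‖ := by rw [hgoal_eq]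
    _ ≤ ∑' n, g n := hle
    _ = Real.exp (-M) * Real.exp (Real.exp 1 * x) := htsum
    _ ≤ Real.exp (-1 * M + 9 * A * t) := hfin
    _ = 1 * Real.exp (-1 * |(k : ℝ) - j| + 9 * A * t) := by rw [one_mul, hM]
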